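/- The function ξ(x) = (1 + k|x|²)^{(4-n)/2} on ℝⁿ, n ≥ 5, with k² = f₀ / (2n(n-2)(n+2)) for a constant f₀ > 0, satisfies Δ²ξ = ((n-4)/2) f₀ ξ^{(n+4)/(n-4)}, ξ > 0, ξ(0) = 1, and ∇ξ(0) = 0. -/

import Mathlib

open MeasureTheory Metric Set

noncomputable section

abbrev En (n : ℕ) := EuclideanSpace ℝ (Fin n)

/-- Partial derivative `∂u/∂xᵢ`. -/
def pd {n : ℕ} (i : Fin n) (u : En n → ℝ) (x : En n) : ℝ :=
  fderiv ℝ u x (EuclideanSpace.single i 1)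

/-- The Laplacian with the paper's sign convention `Δφ = -∑ ∂²φ/∂xᵢ²`. -/
def lap {n : ℕ} (u : En n → ℝ) (x : En n) : ℝ :=
  -∑ i, pd i (pd i u) x

lemma hQ {n : ℕ} {k : ℝ} (hk : 0 < k) (x : En n) : 0 < 1 + k * ‖x‖ ^ 2 := by positivity

lemma pd_eq {n : ℕ} (i : Fin n) {u : En n → ℝ} {D : En n →L[ℝ] ℝ} {x : En n}
    (h : HasFDerivAt u D x) : pd i u x = D (EuclideanSpace.single i 1) := by
  rw [pd, h.fderiv]

lemma inner_single {n : ℕ} (x : En n) (i : Fin n) :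
    (innerSL ℝ x) (EuclideanSpace.single i (1:ℝ)) = x i := by
  simp [EuclideanSpace.inner_single_right]

lemma hasFDerivAt_Q {n : ℕ} (k : ℝ) (x : En n) :
    HasFDerivAt (fun y : En n => 1 + k * ‖y‖ ^ 2) ((2 * k) • innerSL ℝ x) x := by
  have h := (((hasFDerivAt_id x).norm_sq).const_mul k).const_add 1
  refine h.congr_fderiv ?_
  ext v
  simp [smul_smul]
  ring

lemma hasFDerivAt_G {n : ℕ} {k : ℝ} (hk : 0 < k) (a : ℝ) (x : En n) :
    HasFDerivAt (fun y : En n => (1 + k * ‖y‖ ^ 2) ^ a)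
      ((2 * k * a * (1 + k * ‖x‖ ^ 2) ^ (a - 1)) • innerSL ℝ x) x := by
  have h := (hasFDerivAt_Q k x).rpow_const (p := a) (Or.inl (hQ hk x).ne')
  have hEq : (a * (1 + k * ‖x‖ ^ 2) ^ (a - 1)) • ((2 * k) • innerSL ℝ x)
      = (2 * k * a * (1 + k * ‖x‖ ^ 2) ^ (a - 1)) • innerSL ℝ x := by
    rw [smul_smul]; congr 1; ring
  rwa [hEq] at h

lemma hasFDerivAt_W {n : ℕ} {k : ℝ} (hk : 0 < k) (c1 c2 A B : ℝ) (x : En n) :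
    HasFDerivAt (fun y : En n => c1 * (1 + k * ‖y‖ ^ 2) ^ A + c2 * (1 + k * ‖y‖ ^ 2) ^ B)
      ((2 * k * (c1 * A * (1 + k * ‖x‖ ^ 2) ^ (A - 1)
          + c2 * B * (1 + k * ‖x‖ ^ 2) ^ (B - 1))) • innerSL ℝ x) x := by
  have h := ((hasFDerivAt_G hk A x).const_mul c1).add ((hasFDerivAt_G hk B x).const_mul c2)
  have hEq : c1 • ((2 * k * A * (1 + k * ‖x‖ ^ 2) ^ (A - 1)) • innerSL ℝ x)
        + c2 • ((2 * k * B * (1 + k * ‖x‖ ^ 2) ^ (B - 1)) • innerSL ℝ x)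
      = (2 * k * (c1 * A * (1 + k * ‖x‖ ^ 2) ^ (A - 1)
          + c2 * B * (1 + k * ‖x‖ ^ 2) ^ (B - 1))) • innerSL ℝ x := by
    rw [smul_smul, smul_smul, ← add_smul]; congr 1; ring
  rwa [hEq] at h

lemma pd_W {n : ℕ} {k : ℝ} (hk : 0 < k) (c1 c2 A B : ℝ) (i : Fin n) (x : En n) :
    pd i (fun y : En n => c1 * (1 + k * ‖y‖ ^ 2) ^ A + c2 * (1 + k * ‖y‖ ^ 2) ^ B) x
      = (2 * k * (c1 * A * (1 + k * ‖x‖ ^ 2) ^ (A - 1)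
          + c2 * B * (1 + k * ‖x‖ ^ 2) ^ (B - 1))) * x i := by
  rw [pd_eq i (hasFDerivAt_W hk c1 c2 A B x)]
  simp [inner_single]

lemma pd2_W {n : ℕ} {k : ℝ} (hk : 0 < k) (c1 c2 A B : ℝ) (i : Fin n) (x : En n) :
    pd i (pd i (fun y : En n => c1 * (1 + k * ‖y‖ ^ 2) ^ A + c2 * (1 + k * ‖y‖ ^ 2) ^ B)) x
      = (4 * k ^ 2 * (c1 * A * (A - 1) * (1 + k * ‖x‖ ^ 2) ^ (A - 2)
            + c2 * B * (B - 1) * (1 + k * ‖x‖ ^ 2) ^ (B - 2))) * (x i * x i)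
        + 2 * k * (c1 * A * (1 + k * ‖x‖ ^ 2) ^ (A - 1)
            + c2 * B * (1 + k * ‖x‖ ^ 2) ^ (B - 1)) := by
  have hfun : pd i (fun y : En n => c1 * (1 + k * ‖y‖ ^ 2) ^ A + c2 * (1 + k * ‖y‖ ^ 2) ^ B)
      = fun y : En n => ((2 * k * c1 * A) * (1 + k * ‖y‖ ^ 2) ^ (A - 1)
          + (2 * k * c2 * B) * (1 + k * ‖y‖ ^ 2) ^ (B - 1)) * y i := by
    funext y
    rw [pd_W hk c1 c2 A B i y]
    ring
  rw [hfun]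
  have hs := hasFDerivAt_W hk (2 * k * c1 * A) (2 * k * c2 * B) (A - 1) (B - 1) x
  have hc : HasFDerivAt (fun y : En n => y i) ((EuclideanSpace.proj i : En n →L[ℝ] ℝ)) x := by
    have hfe : (fun y : En n => y i) = ⇑(EuclideanSpace.proj (𝕜 := ℝ) i) := by
      funext y; simp
    rw [hfe]; exact (EuclideanSpace.proj (𝕜 := ℝ) i).hasFDerivAt
  have h := HasFDerivAt.mul (𝕜 := ℝ) hs hc
  rw [pd_eq i (u := fun y : En n => ((2 * k * c1 * A) * (1 + k * ‖y‖ ^ 2) ^ (A - 1)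
      + (2 * k * c2 * B) * (1 + k * ‖y‖ ^ 2) ^ (B - 1)) * y i) h]
  have e1 : A - 1 - 1 = A - 2 := by ring
  have e2 : B - 1 - 1 = B - 2 := by ring
  simp [inner_single, e1, e2]
  ring

lemma norm_sq_sum {n : ℕ} (x : En n) : ∑ i, x i * x i = ‖x‖ ^ 2 := by
  rw [EuclideanSpace.norm_eq, Real.sq_sqrt (Finset.sum_nonneg (fun i _ => by positivity))]
  simp [sq]

lemma lap_comb {n : ℕ} {k : ℝ} (hk : 0 < k) (c1 c2 A B : ℝ) (x : En n) :
    lap (fun y : En n => c1 * (1 + k * ‖y‖ ^ 2) ^ A + c2 * (1 + k * ‖y‖ ^ 2) ^ B) x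
      = (-2 * k * c1 * A * ((n : ℝ) + 2 * (A - 1))) * (1 + k * ‖x‖ ^ 2) ^ (A - 1)
        + (4 * k * c1 * A * (A - 1)) * (1 + k * ‖x‖ ^ 2) ^ (A - 2)
        + (-2 * k * c2 * B * ((n : ℝ) + 2 * (B - 1))) * (1 + k * ‖x‖ ^ 2) ^ (B - 1)
        + (4 * k * c2 * B * (B - 1)) * (1 + k * ‖x‖ ^ 2) ^ (B - 2) := by
  rw [lap]
  rw [Finset.sum_congr rfl (fun i _ => pd2_W hk c1 c2 A B i x)]
  rw [Finset.sum_add_distrib, Finset.sum_const, ← Finset.mul_sum, norm_sq_sum,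
    Finset.card_univ, Fintype.card_fin, nsmul_eq_mul]
  have hne : (1 + k * ‖x‖ ^ 2) ≠ 0 := (hQ hk x).ne'
  have hA1 : (1 + k * ‖x‖ ^ 2) ^ (A - 1) = (1 + k * ‖x‖ ^ 2) ^ (A - 2) * (1 + k * ‖x‖ ^ 2) := by
    rw [show A - 1 = (A - 2) + 1 by ring, Real.rpow_add_one hne]
  have hB1 : (1 + k * ‖x‖ ^ 2) ^ (B - 1) = (1 + k * ‖x‖ ^ 2) ^ (B - 2) * (1 + k * ‖x‖ ^ 2) := by
    rw [show B - 1 = (B - 2) + 1 by ring, Real.rpow_add_one hne]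
  linear_combination (4 * k * c1 * A * (A - 1)) * hA1 + (4 * k * c2 * B * (B - 1)) * hB1

/-- The standard bubble `ξ(x) = (1 + k|x|²)^{(4-n)/2}` with
`k² = f₀/(2n(n-2)(n+2))`, `k, f₀ > 0`, solves `Δ²ξ = ((n-4)/2) f₀ ξ^{(n+4)/(n-4)}`,
is positive, and satisfies `ξ(0) = 1`, `∇ξ(0) = 0`. -/
theorem bubble_solution {n : ℕ} (hn : 5 ≤ n) (f₀ k : ℝ) (hf₀ : 0 < f₀) (hk : 0 < k)
    (hkdef : k ^ 2 = f₀ / (2 * n * ((n : ℝ) - 2) * ((n : ℝ) + 2))) :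
    (∀ x : En n,
      lap (lap (fun y : En n => (1 + k * ‖y‖ ^ 2) ^ (((4 : ℝ) - n) / 2))) x
        = ((n : ℝ) - 4) / 2 * f₀ *
          ((1 + k * ‖x‖ ^ 2) ^ (((4 : ℝ) - n) / 2)) ^ (((n : ℝ) + 4) / ((n : ℝ) - 4))) ∧
    (∀ x : En n, 0 < (1 + k * ‖x‖ ^ 2) ^ (((4 : ℝ) - n) / 2)) ∧
    (1 + k * ‖(0 : En n)‖ ^ 2) ^ (((4 : ℝ) - n) / 2) = 1 ∧
    gradient (fun y : En n => (1 + k * ‖y‖ ^ 2) ^ (((4 : ℝ) - n) / 2)) 0 = 0 := by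
  have hn5 : (5 : ℝ) ≤ (n : ℝ) := by exact_mod_cast hn
  have hn0 : (n : ℝ) ≠ 0 := by linarith
  have hn2 : (n : ℝ) - 2 ≠ 0 := by linarith
  have hn2' : (n : ℝ) + 2 ≠ 0 := by linarith
  have hn4 : (n : ℝ) - 4 ≠ 0 := by linarith
  have hk2 : k ^ 2 * (2 * (n : ℝ) * ((n : ℝ) - 2) * ((n : ℝ) + 2)) = f₀ := by
    rw [hkdef]; field_simp
  refine ⟨?_, ?_, ?_, ?_⟩
  · intro x
    set p : ℝ := ((4 : ℝ) - n) / 2 with hp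
    have hXi : (fun y : En n => (1 + k * ‖y‖ ^ 2) ^ p)
        = (fun y : En n => 1 * (1 + k * ‖y‖ ^ 2) ^ p + 0 * (1 + k * ‖y‖ ^ 2) ^ p) := by
      funext y; ring
    rw [hXi]
    have h1 : lap (fun y : En n => 1 * (1 + k * ‖y‖ ^ 2) ^ p + 0 * (1 + k * ‖y‖ ^ 2) ^ p)
        = fun x' : En n => (-2 * k * p * ((n : ℝ) + 2 * (p - 1))) * (1 + k * ‖x'‖ ^ 2) ^ (p - 1)
            + (4 * k * p * (p - 1)) * (1 + k * ‖x'‖ ^ 2) ^ (p - 2) := by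
      funext x'
      rw [lap_comb hk 1 0 p p x']
      ring
    rw [h1, lap_comb hk (-2 * k * p * ((n : ℝ) + 2 * (p - 1))) (4 * k * p * (p - 1))
      (p - 1) (p - 2) x]
    rw [← Real.rpow_mul (hQ hk x).le]
    rw [show p * (((n : ℝ) + 4) / ((n : ℝ) - 4)) = p - 4 by
      rw [hp]; field_simp; ring]
    rw [show p - 1 - 1 = p - 2 by ring, show p - 1 - 2 = p - 3 by ring,
      show p - 2 - 1 = p - 3 by ring, show p - 2 - 2 = p - 4 by ring]
    rw [hp]
    linear_combination ((((n : ℝ) - 4) / 2) *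
      (1 + k * ‖x‖ ^ 2) ^ (((4 : ℝ) - n) / 2 - 4)) * hk2
  · intro x
    exact Real.rpow_pos_of_pos (hQ hk x) _
  · simp
  · have h := hasFDerivAt_G hk (((4 : ℝ) - n) / 2) (0 : En n)
    have hz : ((2 * k * (((4 : ℝ) - n) / 2) * (1 + k * ‖(0 : En n)‖ ^ 2) ^ ((((4 : ℝ) - n) / 2) - 1))
        • innerSL ℝ (0 : En n)) = (0 : En n →L[ℝ] ℝ) := by
      ext v; simp
    rw [hz] at h
    have hg := h.hasGradientAt
    rw [map_zero] at hg
    exact hg.gradient
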